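/- Let $\lambda > 0$, $m > 0$, $R = \sqrt{m/\pi}$ and $\lambda_{c1} = \frac{4m\sqrt{2}}{\pi}$. If $\lambda > \lambda_{c1}$, then $2\pi R + \frac{\lambda\pi}{2R} > 2 \cdot \left(2\pi \frac{R}{\sqrt{2}} + \frac{(\lambda/4)\pi}{2 (R/\sqrt{2})}\right)$; i.e., one ball of area $m$ with charge parameter $\lambda$ has strictly more energy than two far-separated balls of area $m/2$ each carrying half the charge (so charge parameter $\lambda/4$ each). -/

import Mathlib

open Real

theorem ball_splitting_instability (lam m R : ℝ) (hm : 0 < m)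
    (hR : R = Real.sqrt (m / π)) (hlam : 4 * m * Real.sqrt 2 / π < lam) :
    2 * (2 * π * (R / Real.sqrt 2) + (lam / 4) * π / (2 * (R / Real.sqrt 2)))
      < 2 * π * R + lam * π / (2 * R) := by
  have hpi : (0:ℝ) < π := Real.pi_pos
  have hs2 : (0:ℝ) < Real.sqrt 2 := by positivity
  have hs2sq : Real.sqrt 2 ^ 2 = 2 := Real.sq_sqrt (by norm_num)
  have hs2lt : 1 < Real.sqrt 2 := by nlinarith
  have hR0 : 0 < R := by
    rw [hR]; exact Real.sqrt_pos.mpr (by positivity)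
  have hR2 : R ^ 2 = m / π := by
    rw [hR]; exact Real.sq_sqrt (by positivity)
  have hm' : π * R ^ 2 = m := by
    rw [hR2]; field_simp
  have hlam' : 4 * R ^ 2 * Real.sqrt 2 < lam := by
    have : 4 * m * Real.sqrt 2 / π = 4 * R ^ 2 * Real.sqrt 2 := by
      rw [hR2]; field_simp
    linarith [this ▸ hlam]
  have key : (2:ℝ) * (2 * π * (R / Real.sqrt 2) + (lam / 4) * π / (2 * (R / Real.sqrt 2)))
      = 2 * Real.sqrt 2 * π * R + lam * π * Real.sqrt 2 / (4 * R) := by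
    field_simp
    linear_combination (-8 * R ^ 2) * hs2sq
  rw [key, ← mul_lt_mul_iff_of_pos_right (by positivity : (0:ℝ) < 4 * R)]
  have e1 : (2 * Real.sqrt 2 * π * R + lam * π * Real.sqrt 2 / (4 * R)) * (4 * R)
      = 8 * Real.sqrt 2 * π * R ^ 2 + lam * π * Real.sqrt 2 := by
    field_simp; ring
  have e2 : (2 * π * R + lam * π / (2 * R)) * (4 * R) = 8 * π * R ^ 2 + 2 * lam * π := by
    field_simp; ring
  rw [e1, e2]
  have hprod := mul_pos (mul_pos hs2 (sub_pos.mpr hs2lt))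
    (mul_pos hpi (sub_pos.mpr hlam'))
  have hred : Real.sqrt 2 * (Real.sqrt 2 - 1) * (π * (lam - 4 * R ^ 2 * Real.sqrt 2))
      = π * (2 * lam - Real.sqrt 2 * lam - 8 * R ^ 2 * Real.sqrt 2 + 8 * R ^ 2) := by
    linear_combination (π * (lam - 4 * R ^ 2 * Real.sqrt 2 + 4 * R ^ 2)) * hs2sq
  rw [hred] at hprod
  nlinarith [hprod]
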